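/- Let q ≥ 3 be a prime power. The connected component H(q) of the identity in the graph G'(q) = Cay(GL(2,q), ops(T')) with T' = ([2],{(1,2)}) has vertex set exactly the set of matrices of the form [[α^i, 0],[α^j·a, α^j]] for i,j ∈ {0,...,q−2} and a ∈ F_q, where α is a fixed generator of F_q^×. -/

import Mathlib

open Matrix Finset

/-- A graph is Hamilton connected if any two distinct vertices are joined by a Hamilton path. -/
def HamConn {V : Type*} [DecidableEq V] (G : SimpleGraph V) : Prop :=
  ∀ x y : V, x ≠ y → ∃ p : G.Walk x y, p.IsHamiltonian

/-- A bipartite graph is Hamilton laceable: there is a proper 2-coloring such that any two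
vertices of different colors are joined by a Hamilton path. -/
def HamLaceable {V : Type*} [DecidableEq V] (G : SimpleGraph V) : Prop :=
  ∃ c : V → Bool, (∀ ⦃x y⦄, G.Adj x y → c x ≠ c y) ∧
    ∀ x y : V, c x ≠ c y → ∃ p : G.Walk x y, p.IsHamiltonian

/-- The undirected Cayley graph of a group with connection set `S` (acting on the left). -/
def cayley {G : Type*} [Group G] (S : Set G) : SimpleGraph G :=
  SimpleGraph.fromRel (fun x y => ∃ s ∈ S, y = s * x)

/-- The set of row operations specified by a transition graph `E` on `[n]` together with
row multiplications/divisions by `α`: elementary matrices `A_{ij}`, `A_{ij}⁻¹` for edges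
`(i,j)` of `E`, and `M_i`, `M_i⁻¹` for all `i`. -/
def ops (n : ℕ) (F : Type*) [Field F] (E : Fin n → Fin n → Prop) (α : F) :
    Set (Matrix.GeneralLinearGroup (Fin n) F) :=
  {A | (∃ i j, E i j ∧ ((A : Matrix (Fin n) (Fin n) F) = 1 + Matrix.single j i 1 ∨
        (A : Matrix (Fin n) (Fin n) F) = 1 + Matrix.single j i (-1))) ∨
      (∃ i, (A : Matrix (Fin n) (Fin n) F) = 1 + Matrix.single i i (α - 1) ∨
        (A : Matrix (Fin n) (Fin n) F) = 1 + Matrix.single i i (α⁻¹ - 1))}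

/-- Bypass transition graphs: a single vertex, or obtained from a bypass transition graph
on `[n-1]` by adding the vertex `n` with an in-edge from some `i ∈ [n-1]` and an out-edge
to some `j ∈ [n-1]`. -/
inductive IsBypass : (n : ℕ) → (Fin n → Fin n → Prop) → Prop
  | single (E : Fin 1 → Fin 1 → Prop) : IsBypass 1 E
  | step (n : ℕ) (E : Fin (n + 1) → Fin (n + 1) → Prop)
      (hin : ∃ i : Fin n, E i.castSucc (Fin.last n))
      (hout : ∃ j : Fin n, E (Fin.last n) j.castSucc)
      (hrec : IsBypass n (fun a b => E a.castSucc b.castSucc)) :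
      IsBypass (n + 1) E

/-- The transition graph `T' = ([2], {(1,2)})`. -/
def Tonly12 : Fin 2 → Fin 2 → Prop := fun i j => i = 0 ∧ j = 1

section helpers
variable {G : Type*} [Group G] {S : Set G}

lemma reach_smul {s : G} (hs : s ∈ S) (x : G) : (cayley S).Reachable x (s * x) := by
  by_cases h : s * x = x
  · rw [h]
  · exact SimpleGraph.Adj.reachable (by
      rw [cayley, SimpleGraph.fromRel_adj]
      exact ⟨fun he => h he.symm, Or.inl ⟨s, hs, rfl⟩⟩)

lemma reach_pow {s : G} (hs : s ∈ S) (x : G) : ∀ n : ℕ, (cayley S).Reachable x (s ^ n * x)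
  | 0 => by simpa using SimpleGraph.Reachable.refl x
  | n+1 => by
    refine (reach_pow hs x n).trans ?_
    rw [pow_succ', mul_assoc]
    exact reach_smul hs _

lemma cayley_adj {x y : G} (h : (cayley S).Adj x y) :
    (∃ s ∈ S, y = s * x) ∨ (∃ s ∈ S, x = s * y) := by
  rw [cayley, SimpleGraph.fromRel_adj] at h
  exact h.2
end helpers

/-- the connected component of the identity in
`G'(q) = Cay(GL(2,q), ops(T'))` with `T' = ([2],{(1,2)})` has vertex set exactly the
matrices `[[α^i, 0],[α^j·a, α^j]]` for `i,j ∈ {0,…,q−2}` and `a ∈ F_q`. -/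
theorem component_of_identity (q : ℕ) (hq3 : 3 ≤ q)
    (F : Type) [Field F] [Fintype F] [DecidableEq F] (hq : Fintype.card F = q)
    (α : Fˣ) (hα : ∀ x : Fˣ, x ∈ Subgroup.zpowers α) :
    ∀ A : Matrix.GeneralLinearGroup (Fin 2) F,
      (cayley (ops 2 F Tonly12 (α : F))).Reachable 1 A ↔
      ∃ i j : ℕ, i < q - 1 ∧ j < q - 1 ∧ ∃ a : F,
        (A : Matrix (Fin 2) (Fin 2) F) = !![(α : F) ^ i, 0; (α : F) ^ j * a, (α : F) ^ j] := by
  set S := ops 2 F Tonly12 (α : F) with hS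
  have hαne : (α : F) ≠ 0 := Units.ne_zero α
  -- order of α
  have horder : orderOf α = q - 1 := by
    rw [orderOf_eq_card_of_forall_mem_zpowers hα, Nat.card_eq_fintype_card, Fintype.card_units, hq]
  have hq1pos : 0 < q - 1 := by omega
  -- every nonzero element is a small power of α
  have hexists : ∀ x : F, x ≠ 0 → ∃ m : ℕ, m < q - 1 ∧ (α : F) ^ m = x := by
    intro x hx
    obtain ⟨n, hn⟩ := (mem_powers_iff_mem_zpowers.mpr (hα (Units.mk0 x hx)) :
      Units.mk0 x hx ∈ Submonoid.powers α)
    refine ⟨n % (q - 1), Nat.mod_lt _ hq1pos, ?_⟩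
    have : α ^ (n % (q - 1)) = Units.mk0 x hx := by
      rw [← horder, pow_mod_orderOf]; exact hn
    calc (α : F) ^ (n % (q-1)) = ((α ^ (n % (q-1)) : Fˣ) : F) := by
          rw [Units.val_pow_eq_pow_val]
      _ = x := by rw [this]; rfl
  -- properties of generators
  have hgen : ∀ s ∈ S, (s : Matrix (Fin 2) (Fin 2) F) 0 1 = 0 ∧
      (s : Matrix (Fin 2) (Fin 2) F) 0 0 ≠ 0 := by
    rintro s (⟨i, j, ⟨hi, hj⟩, hs | hs⟩ | ⟨i, hs | hs⟩) <;> subst_vars <;>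
      rw [hs] <;> [skip; skip; fin_cases i; fin_cases i] <;>
      simp [Matrix.one_apply, Matrix.single, hαne, sub_eq_zero,
        inv_ne_zero hαne]
  -- multiplication by a generator preserves triangularity (both ways)
  have hstep : ∀ s ∈ S, ∀ X : Matrix.GeneralLinearGroup (Fin 2) F,
      (((s * X : Matrix.GeneralLinearGroup (Fin 2) F) : Matrix (Fin 2) (Fin 2) F) 0 1 = 0 ↔
        (X : Matrix (Fin 2) (Fin 2) F) 0 1 = 0) := by
    intro s hs X
    obtain ⟨h01, h00⟩ := hgen s hs
    have : ((s * X : Matrix.GeneralLinearGroup (Fin 2) F) : Matrix (Fin 2) (Fin 2) F) 0 1 =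
        (s : Matrix (Fin 2) (Fin 2) F) 0 0 * (X : Matrix (Fin 2) (Fin 2) F) 0 1 := by
      rw [Units.val_mul, Matrix.mul_apply, Fin.sum_univ_two, h01, zero_mul, add_zero]
    rw [this, mul_eq_zero]
    simp [h00]
  -- reachability preserves triangularity
  have hreach : ∀ {X Y : Matrix.GeneralLinearGroup (Fin 2) F},
      (cayley S).Reachable X Y →
      ((X : Matrix (Fin 2) (Fin 2) F) 0 1 = 0 ↔ (Y : Matrix (Fin 2) (Fin 2) F) 0 1 = 0) := by
    intro X Y h
    obtain ⟨w⟩ := h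
    induction w with
    | nil => exact Iff.rfl
    | cons h p ih =>
      refine Iff.trans ?_ ih
      rcases cayley_adj h with ⟨s, hs, he⟩ | ⟨s, hs, he⟩
      · rw [he]; exact (hstep s hs _).symm
      · rw [he]; exact hstep s hs _
  intro A
  constructor
  · -- forward direction
    intro h
    have h01 : (A : Matrix (Fin 2) (Fin 2) F) 0 1 = 0 := by
      have := hreach h
      simpa using this.mp (by simp [Matrix.one_apply])
    have hdet : IsUnit (A : Matrix (Fin 2) (Fin 2) F).det :=
      (Matrix.isUnit_iff_isUnit_det _).mp A.isUnit
    rw [Matrix.det_fin_two, h01, zero_mul, sub_zero] at hdet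
    have h00 : (A : Matrix (Fin 2) (Fin 2) F) 0 0 ≠ 0 := by
      intro h0; rw [h0, zero_mul] at hdet; exact hdet.ne_zero rfl
    have h11 : (A : Matrix (Fin 2) (Fin 2) F) 1 1 ≠ 0 := by
      intro h0; rw [h0, mul_zero] at hdet; exact hdet.ne_zero rfl
    obtain ⟨i, hi, hi'⟩ := hexists _ h00
    obtain ⟨j, hj, hj'⟩ := hexists _ h11
    refine ⟨i, j, hi, hj, ((α : F) ^ j)⁻¹ * (A : Matrix (Fin 2) (Fin 2) F) 1 0, ?_⟩
    have hja : (α : F) ^ j * (((α : F) ^ j)⁻¹ * (A : Matrix (Fin 2) (Fin 2) F) 1 0) =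
        (A : Matrix (Fin 2) (Fin 2) F) 1 0 := by
      rw [← mul_assoc, mul_inv_cancel₀ (pow_ne_zero _ hαne), one_mul]
    ext x y
    fin_cases x <;> fin_cases y <;>
      simp [hi', hj', h01, mul_inv_cancel_left₀ h11]
  · -- backward direction
    rintro ⟨i, j, hi, hj, a, hA⟩
    -- generator units
    have hD0inv : !![(α:F),0;0,1] * !![(α:F)⁻¹,0;0,1] = 1 := by
      rw [Matrix.mul_fin_two, Matrix.one_fin_two]
      simp [mul_inv_cancel₀ hαne]
    have hD0inv' : !![(α:F)⁻¹,0;0,1] * !![(α:F),0;0,1] = 1 := by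
      rw [Matrix.mul_fin_two, Matrix.one_fin_two]
      simp [inv_mul_cancel₀ hαne]
    set D0 : Matrix.GeneralLinearGroup (Fin 2) F :=
      ⟨!![(α:F),0;0,1], !![(α:F)⁻¹,0;0,1], hD0inv, hD0inv'⟩ with hD0
    set D0' : Matrix.GeneralLinearGroup (Fin 2) F :=
      ⟨!![(α:F)⁻¹,0;0,1], !![(α:F),0;0,1], hD0inv', hD0inv⟩ with hD0'
    have hD1inv : !![(1:F),0;0,(α:F)] * !![(1:F),0;0,(α:F)⁻¹] = 1 := by
      rw [Matrix.mul_fin_two, Matrix.one_fin_two]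
      simp [mul_inv_cancel₀ hαne]
    have hD1inv' : !![(1:F),0;0,(α:F)⁻¹] * !![(1:F),0;0,(α:F)] = 1 := by
      rw [Matrix.mul_fin_two, Matrix.one_fin_two]
      simp [inv_mul_cancel₀ hαne]
    set D1 : Matrix.GeneralLinearGroup (Fin 2) F :=
      ⟨!![(1:F),0;0,(α:F)], !![(1:F),0;0,(α:F)⁻¹], hD1inv, hD1inv'⟩ with hD1
    have hLpinv : !![(1:F),0;1,1] * !![(1:F),0;-1,1] = 1 := by
      rw [Matrix.mul_fin_two, Matrix.one_fin_two]; norm_num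
    have hLpinv' : !![(1:F),0;-1,1] * !![(1:F),0;1,1] = 1 := by
      rw [Matrix.mul_fin_two, Matrix.one_fin_two]; norm_num
    set Lp : Matrix.GeneralLinearGroup (Fin 2) F :=
      ⟨!![(1:F),0;1,1], !![(1:F),0;-1,1], hLpinv, hLpinv'⟩ with hLp
    -- memberships
    have hD0S : D0 ∈ S := by
      refine Or.inr ⟨0, Or.inl ?_⟩
      ext x y
      fin_cases x <;> fin_cases y <;>
        simp [hD0, Matrix.one_apply, Matrix.single]
    have hD0'S : D0' ∈ S := by
      refine Or.inr ⟨0, Or.inr ?_⟩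
      ext x y
      fin_cases x <;> fin_cases y <;>
        simp [hD0', Matrix.one_apply, Matrix.single]
    have hD1S : D1 ∈ S := by
      refine Or.inr ⟨1, Or.inl ?_⟩
      ext x y
      fin_cases x <;> fin_cases y <;>
        simp [hD1, Matrix.one_apply, Matrix.single]
    have hLpS : Lp ∈ S := by
      refine Or.inl ⟨0, 1, ⟨rfl, rfl⟩, Or.inl ?_⟩
      ext x y
      fin_cases x <;> fin_cases y <;>
        simp [hLp, Matrix.one_apply, Matrix.single]
    -- power formulas
    have hD0pow : ∀ n : ℕ, ((D0 ^ n : Matrix.GeneralLinearGroup (Fin 2) F) :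
        Matrix (Fin 2) (Fin 2) F) = !![(α:F)^n,0;0,1] := by
      intro n; induction n with
      | zero => simp [Matrix.one_fin_two]
      | succ n ih =>
        rw [pow_succ, Units.val_mul, ih, hD0]
        rw [Matrix.mul_fin_two]
        simp [pow_succ]
    have hD0'pow : ∀ n : ℕ, ((D0' ^ n : Matrix.GeneralLinearGroup (Fin 2) F) :
        Matrix (Fin 2) (Fin 2) F) = !![((α:F)⁻¹)^n,0;0,1] := by
      intro n; induction n with
      | zero => simp [Matrix.one_fin_two]
      | succ n ih =>
        rw [pow_succ, Units.val_mul, ih, hD0']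
        rw [Matrix.mul_fin_two]
        simp [pow_succ]
    have hD1pow : ∀ n : ℕ, ((D1 ^ n : Matrix.GeneralLinearGroup (Fin 2) F) :
        Matrix (Fin 2) (Fin 2) F) = !![(1:F),0;0,(α:F)^n] := by
      intro n; induction n with
      | zero => simp [Matrix.one_fin_two]
      | succ n ih =>
        rw [pow_succ, Units.val_mul, ih, hD1]
        rw [Matrix.mul_fin_two]
        simp [pow_succ]
    by_cases ha : a = 0
    · -- diagonal case
      have hprod : A = D0 ^ i * (D1 ^ j * 1) := by
        apply Units.ext
        rw [Units.val_mul, Units.val_mul, Units.val_one, mul_one, hD0pow, hD1pow,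
          Matrix.mul_fin_two, hA, ha]
        norm_num
      rw [hprod]
      exact ((reach_pow hD1S 1 j).trans (reach_pow hD0S _ i))
    · -- general case
      have hbne : (α:F) ^ j * a ≠ 0 := mul_ne_zero (pow_ne_zero _ hαne) ha
      obtain ⟨k, _, hk⟩ := hexists _ hbne
      have hprod : A = D0 ^ i * (D0' ^ k * (Lp * (D0 ^ k * (D1 ^ j * 1)))) := by
        apply Units.ext
        simp only [Units.val_mul, Units.val_one, mul_one]
        rw [hD0pow, hD0'pow, hD1pow, hD0pow, hA]
        rw [Matrix.mul_fin_two, Matrix.mul_fin_two, Matrix.mul_fin_two, Matrix.mul_fin_two]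
        rw [← hk]
        have : ((α:F)⁻¹)^k * (α:F)^k = 1 := by
          rw [← mul_pow, inv_mul_cancel₀ hαne, one_pow]
        norm_num [this]
      rw [hprod]
      exact (((((reach_pow hD1S 1 j).trans (reach_pow hD0S _ k)).trans
        (reach_smul hLpS _)).trans (reach_pow hD0'S _ k)).trans (reach_pow hD0S _ i))
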